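/- Let ρ₁, ρ₂ ≥ 0 be real numbers, H₁ an N×M₁ complex matrix, H₂ an N×M₂ complex matrix, and Q an M₁×M₂ complex matrix with Q Q† ⪯ I_{M₁}. Then det(I_N + ρ₁ H₁ H₁† + ρ₂ H₂ H₂† + √(ρ₁ρ₂) H₁ Q H₂† + √(ρ₁ρ₂) H₂ Q† H₁†) ≤ 2^N · det(I_N + ρ₁ H₁ H₁† + ρ₂ H₂ H₂†), where both determinants are those of Hermitian positive definite matrices and hence are positive real numbers. -/

import Mathlib

open scoped ComplexOrder Matrix

open Matrix in
private lemma exists_real_of_pos' {z : ℂ} (hz : 0 < z) : ∃ a : ℝ, 0 < a ∧ z = (a : ℂ) := by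
  refine ⟨z.re, ?_, ?_⟩
  · exact (Complex.lt_def.mp hz).1
  · have him : z.im = 0 := ((Complex.lt_def.mp hz).2).symm
    exact (Complex.ext (by simp) (by simp [him])).symm

open Matrix in
private lemma det_le_of_two_smul' {n : ℕ} {A S P : Matrix (Fin n) (Fin n) ℂ}
    (hA : A.PosDef) (hS : S.PosSemidef) (hP : P.PosSemidef)
    (h : S + P = (2:ℂ) • A) :
    ∃ m : ℝ, 0 ≤ m ∧ m ≤ 2 ^ n ∧ S.det = (m : ℂ) * A.det := by
  open scoped MatrixOrder in
  set R := CFC.sqrt A with hRdef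
  open scoped MatrixOrder in
  have hRps : R.PosSemidef := (CFC.sqrt_nonneg A).posSemidef
  open scoped MatrixOrder in
  have hR2 : R * R = A := CFC.sqrt_mul_sqrt_self A hA.posSemidef.nonneg
  have hdetA : A.det ≠ 0 := hA.det_pos.ne'
  have hdetR : IsUnit R.det := by
    rw [isUnit_iff_ne_zero]
    intro h0
    apply hdetA
    rw [← hR2, det_mul, h0, zero_mul]
  have hinv : R⁻¹ * R = 1 := nonsing_inv_mul _ hdetR
  have hinv' : R * R⁻¹ = 1 := mul_nonsing_inv _ hdetR
  have hTH : R⁻¹.IsHermitian := hRps.isHermitian.inv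
  set M := R⁻¹ * S * R⁻¹ with hMdef
  have hM : M.PosSemidef := by
    have := hS.mul_mul_conjTranspose_same R⁻¹
    rwa [hTH.eq] at this
  have hRAR : R⁻¹ * A * R⁻¹ = 1 := by
    rw [← hR2, ← Matrix.mul_assoc R⁻¹ R R, hinv, one_mul, hinv']
  have hC : ((2:ℂ) • (1 : Matrix (Fin n) (Fin n) ℂ) - M).PosSemidef := by
    have hPe : P = (2:ℂ) • A - S := by rw [← h]; abel
    have := hP.mul_mul_conjTranspose_same R⁻¹
    rw [hTH.eq] at this
    have heq : R⁻¹ * P * R⁻¹ = (2:ℂ) • (1 : Matrix (Fin n) (Fin n) ℂ) - M := by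
      rw [hPe, Matrix.mul_sub, Matrix.sub_mul, Matrix.mul_smul, Matrix.smul_mul, hRAR]
    rwa [heq] at this
  set lam := hM.isHermitian.eigenvalues with hlam
  have hnonneg : ∀ i, 0 ≤ lam i := hM.eigenvalues_nonneg
  have hle2 : ∀ i, lam i ≤ 2 := by
    intro i
    set U := hM.isHermitian.eigenvectorUnitary with hU
    have hdiag : star (U : Matrix (Fin n) (Fin n) ℂ) * M * (U : Matrix (Fin n) (Fin n) ℂ) =
        diagonal (RCLike.ofReal ∘ lam) := by
      have := hM.isHermitian.conjStarAlgAut_star_eigenvectorUnitary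
      rwa [Unitary.conjStarAlgAut_star_apply] at this
    have hcong := hC.conjTranspose_mul_mul_same (U : Matrix (Fin n) (Fin n) ℂ)
    rw [← Matrix.star_eq_conjTranspose] at hcong
    have hUU : star (U : Matrix (Fin n) (Fin n) ℂ) * (U : Matrix (Fin n) (Fin n) ℂ) = 1 :=
      UnitaryGroup.star_mul_self U
    have heq : star (U : Matrix (Fin n) (Fin n) ℂ) * ((2:ℂ) • (1 : Matrix (Fin n) (Fin n) ℂ) - M)
        * (U : Matrix (Fin n) (Fin n) ℂ)
        = diagonal (fun i => (2:ℂ) - (lam i : ℂ)) := by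
      rw [Matrix.mul_sub, Matrix.sub_mul, hdiag, Matrix.mul_smul, Matrix.smul_mul, mul_one, hUU]
      ext j k
      by_cases hjk : j = k <;>
        simp [Matrix.diagonal_apply, hjk, Matrix.one_apply, Matrix.sub_apply]
    rw [heq] at hcong
    have := posSemidef_diagonal_iff.mp hcong i
    have h2 : ((2 - lam i : ℝ) : ℂ) = (2:ℂ) - (lam i : ℂ) := by push_cast; ring
    rw [← h2] at this
    have := Complex.zero_le_real.mp this
    linarith
  refine ⟨∏ i, lam i, Finset.prod_nonneg fun i _ => hnonneg i, ?_, ?_⟩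
  · calc ∏ i, lam i ≤ ∏ _i : Fin n, (2:ℝ) :=
          Finset.prod_le_prod (fun i _ => hnonneg i) (fun i _ => hle2 i)
      _ = 2 ^ n := by simp
  · have hSM : S = R * M * R := by
      rw [hMdef, ← Matrix.mul_assoc, ← Matrix.mul_assoc, hinv', one_mul, Matrix.mul_assoc, hinv,
        mul_one]
    have hdetM : M.det = ((∏ i, lam i : ℝ) : ℂ) := by
      rw [hM.isHermitian.det_eq_prod_eigenvalues]
      push_cast
      rfl
    rw [hSM, det_mul, det_mul, hdetM]
    have : R.det * R.det = A.det := by rw [← det_mul, hR2]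
    rw [mul_comm R.det _, mul_assoc, this]

/-- For `ρ₁, ρ₂ ≥ 0`, `H₁ : N×M₁`, `H₂ : N×M₂`, and `Q : M₁×M₂` with `Q Qᴴ ⪯ I`,
both `I + ρ₁H₁H₁ᴴ + ρ₂H₂H₂ᴴ + √(ρ₁ρ₂)H₁QH₂ᴴ + √(ρ₁ρ₂)H₂QᴴH₁ᴴ` and
`I + ρ₁H₁H₁ᴴ + ρ₂H₂H₂ᴴ` are Hermitian positive definite; their determinants are positive
reals and `det(first) ≤ 2^N · det(second)`. -/
theorem det_correlated_le_pow_two_det {M₁ M₂ N : ℕ} (ρ₁ ρ₂ : ℝ) (hρ₁ : 0 ≤ ρ₁) (hρ₂ : 0 ≤ ρ₂)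
    (H₁ : Matrix (Fin N) (Fin M₁) ℂ) (H₂ : Matrix (Fin N) (Fin M₂) ℂ)
    (Q : Matrix (Fin M₁) (Fin M₂) ℂ)
    (hQ : ((1 : Matrix (Fin M₁) (Fin M₁) ℂ) - Q * Qᴴ).PosSemidef) :
    ((1 : Matrix (Fin N) (Fin N) ℂ) + (ρ₁ : ℂ) • (H₁ * H₁ᴴ) + (ρ₂ : ℂ) • (H₂ * H₂ᴴ) +
        (Real.sqrt (ρ₁ * ρ₂) : ℂ) • (H₁ * Q * H₂ᴴ) +
        (Real.sqrt (ρ₁ * ρ₂) : ℂ) • (H₂ * Qᴴ * H₁ᴴ)).PosDef ∧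
    ((1 : Matrix (Fin N) (Fin N) ℂ) + (ρ₁ : ℂ) • (H₁ * H₁ᴴ) + (ρ₂ : ℂ) • (H₂ * H₂ᴴ)).PosDef ∧
    ∃ a b : ℝ, 0 < a ∧ 0 < b ∧
      ((1 : Matrix (Fin N) (Fin N) ℂ) + (ρ₁ : ℂ) • (H₁ * H₁ᴴ) + (ρ₂ : ℂ) • (H₂ * H₂ᴴ) +
          (Real.sqrt (ρ₁ * ρ₂) : ℂ) • (H₁ * Q * H₂ᴴ) +
          (Real.sqrt (ρ₁ * ρ₂) : ℂ) • (H₂ * Qᴴ * H₁ᴴ)).det = (a : ℂ) ∧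
      ((1 : Matrix (Fin N) (Fin N) ℂ) + (ρ₁ : ℂ) • (H₁ * H₁ᴴ) + (ρ₂ : ℂ) • (H₂ * H₂ᴴ)).det
        = (b : ℂ) ∧
      a ≤ 2 ^ N * b := by
  open Matrix in
  set s₁ : ℂ := (Real.sqrt ρ₁ : ℂ) with hs₁def
  set s₂ : ℂ := (Real.sqrt ρ₂ : ℂ) with hs₂def
  have hs₁ : star s₁ = s₁ := by simp [hs₁def, Complex.star_def, Complex.conj_ofReal]
  have hs₂ : star s₂ = s₂ := by simp [hs₂def, Complex.star_def, Complex.conj_ofReal]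
  have e1 : s₁ * s₁ = (ρ₁ : ℂ) := by
    rw [hs₁def, ← Complex.ofReal_mul, Real.mul_self_sqrt hρ₁]
  have e2 : s₂ * s₂ = (ρ₂ : ℂ) := by
    rw [hs₂def, ← Complex.ofReal_mul, Real.mul_self_sqrt hρ₂]
  have e12 : (Real.sqrt (ρ₁ * ρ₂) : ℂ) = s₁ * s₂ := by
    rw [hs₁def, hs₂def, ← Complex.ofReal_mul, Real.sqrt_mul hρ₁]
  set S : Matrix (Fin N) (Fin N) ℂ :=
    (1 : Matrix (Fin N) (Fin N) ℂ) + (ρ₁ : ℂ) • (H₁ * H₁ᴴ) + (ρ₂ : ℂ) • (H₂ * H₂ᴴ) +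
      (Real.sqrt (ρ₁ * ρ₂) : ℂ) • (H₁ * Q * H₂ᴴ) +
      (Real.sqrt (ρ₁ * ρ₂) : ℂ) • (H₂ * Qᴴ * H₁ᴴ) with hSdef
  set A : Matrix (Fin N) (Fin N) ℂ :=
    (1 : Matrix (Fin N) (Fin N) ℂ) + (ρ₁ : ℂ) • (H₁ * H₁ᴴ) + (ρ₂ : ℂ) • (H₂ * H₂ᴴ) with hAdef
  set B : Matrix (Fin N) (Fin M₁) ℂ := s₁ • H₁ with hBdef
  set E : Matrix (Fin N) (Fin M₂) ℂ := s₁ • (H₁ * Q) + s₂ • H₂ with hEdef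
  set D : Matrix (Fin N) (Fin M₂) ℂ := s₁ • (H₁ * Q) - s₂ • H₂ with hDdef
  set G : Matrix (Fin N) (Fin N) ℂ := B * ((1 : Matrix (Fin M₁) (Fin M₁) ℂ) - Q * Qᴴ) * Bᴴ
    with hGdef
  have hG : G.PosSemidef := hQ.mul_mul_conjTranspose_same B
  have hEE : (E * Eᴴ).PosSemidef := posSemidef_self_mul_conjTranspose E
  have hDD : (D * Dᴴ).PosSemidef := posSemidef_self_mul_conjTranspose D
  have hS_eq : S = 1 + (G + E * Eᴴ) := by
    rw [hSdef, hAdef, hGdef, hEdef, hBdef, e12]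
    simp only [conjTranspose_add, conjTranspose_smul, conjTranspose_mul, hs₁, hs₂,
      Matrix.add_mul, Matrix.mul_add, Matrix.mul_sub, Matrix.sub_mul,
      Matrix.smul_mul, Matrix.mul_smul, smul_smul, Matrix.mul_one, Matrix.one_mul,
      Matrix.mul_assoc, e1, e2]
    rw [← e1, ← e2]
    module
  have hsum : S + (1 + (G + D * Dᴴ)) = (2:ℂ) • A := by
    rw [hSdef, hAdef, hGdef, hDdef, hBdef, e12]
    simp only [conjTranspose_sub, conjTranspose_add, conjTranspose_smul, conjTranspose_mul,
      hs₁, hs₂, Matrix.add_mul, Matrix.mul_add, Matrix.mul_sub, Matrix.sub_mul,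
      Matrix.smul_mul, Matrix.mul_smul, smul_smul, Matrix.mul_one, Matrix.one_mul,
      Matrix.mul_assoc, smul_add, e1, e2]
    rw [← e1, ← e2]
    module
  have hA_pd : A.PosDef := by
    rw [hAdef, add_assoc]
    refine Matrix.PosDef.add_posSemidef Matrix.PosDef.one (Matrix.PosSemidef.add ?_ ?_)
    · have hBB : (ρ₁ : ℂ) • (H₁ * H₁ᴴ) = B * Bᴴ := by
        rw [hBdef, conjTranspose_smul, Matrix.smul_mul, Matrix.mul_smul, smul_smul, hs₁, e1]
      rw [hBB]; exact posSemidef_self_mul_conjTranspose B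
    · have : (ρ₂ : ℂ) • (H₂ * H₂ᴴ) = (s₂ • H₂) * (s₂ • H₂)ᴴ := by
        rw [conjTranspose_smul, Matrix.smul_mul, Matrix.mul_smul, smul_smul, hs₂, e2]
      rw [this]; exact posSemidef_self_mul_conjTranspose _
  have hS_pd : S.PosDef := by
    rw [hS_eq]
    exact Matrix.PosDef.add_posSemidef Matrix.PosDef.one (hG.add hEE)
  refine ⟨hS_pd, hA_pd, ?_⟩
  obtain ⟨m, hm0, hm2, hdet⟩ := det_le_of_two_smul' hA_pd hS_pd.posSemidef
    (Matrix.PosSemidef.one.add (hG.add hDD)) hsum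
  obtain ⟨a, ha, haeq⟩ := exists_real_of_pos' hS_pd.det_pos
  obtain ⟨b, hb, hbeq⟩ := exists_real_of_pos' hA_pd.det_pos
  refine ⟨a, b, ha, hb, haeq, hbeq, ?_⟩
  have hcast : (a : ℂ) = ((m * b : ℝ) : ℂ) := by
    rw [← haeq, hdet, hbeq]; push_cast; ring
  have hab : a = m * b := by exact_mod_cast hcast
  rw [hab]
  exact mul_le_mul_of_nonneg_right hm2 hb.le
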